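/- Let R be a p-torsion free perfectoid ring (p-adically complete, with ϖ ∈ R such that (ϖ^p) = (p) and x ↦ x^p inducing an isomorphism R/ϖ ≅ R/p). Then R is reduced. -/

import Mathlib

/-- The defining conditions on `ϖ` for a `p`-torsion free perfectoid ring:
`(ϖ^p) = (p)` and the map `R/ϖ → R/p`, `x ↦ x^p`, is bijective
(stated elementwise: surjectivity of `x ↦ x^p mod p` and the kernel condition). -/
def PerfectoidCond (p : ℕ) (R : Type*) [CommRing R] (ϖ : R) : Prop :=
  Ideal.span {ϖ ^ p} = Ideal.span {(p : R)} ∧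
  (∀ y : R, ∃ x : R, y - x ^ p ∈ Ideal.span {(p : R)}) ∧
  (∀ x : R, x ^ p ∈ Ideal.span {(p : R)} → x ∈ Ideal.span {ϖ})

/-- a p-torsion free perfectoid ring is reduced. -/
theorem stmt_3 {p : ℕ} (hp : p.Prime) (R : Type*) [CommRing R]
    (hnzd : (p : R) ∈ nonZeroDivisors R)
    (hc : IsAdicComplete (Ideal.span {(p : R)}) R)
    (ϖ : R) (hϖ : PerfectoidCond p R ϖ) :
    IsReduced R := by
  obtain ⟨hspan, _hsurj, hker⟩ := hϖ
  have hp2 : 2 ≤ p := hp.two_le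
  -- ϖ^p divides p
  have hmem : (p : R) ∈ Ideal.span {ϖ ^ p} := by
    rw [hspan]; exact Ideal.mem_span_singleton_self _
  obtain ⟨c, hc'⟩ := Ideal.mem_span_singleton.mp hmem
  -- ϖ is a nonzerodivisor
  have hϖnzd : ϖ ∈ nonZeroDivisors R := by
    rw [mem_nonZeroDivisors_iff_right]
    intro t ht
    apply mem_nonZeroDivisors_iff_right.mp hnzd
    have hpow : ϖ ^ p = ϖ * ϖ ^ (p - 1) := by
      conv_lhs => rw [show p = 1 + (p - 1) by omega]
      rw [pow_add, pow_one]
    have : t * (p : R) = t * ϖ * (ϖ ^ (p - 1) * c) := by rw [hc', hpow]; ring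
    rw [this, ht, zero_mul]
  -- key: if x^2 = 0 then x ∈ (ϖ^n) for all n
  have key : ∀ n : ℕ, ∀ x : R, x ^ 2 = 0 → x ∈ Ideal.span {ϖ ^ n} := by
    intro n
    induction n with
    | zero => intro x _; simp [Ideal.span_singleton_one]
    | succ n ih =>
      intro x hx
      have hxp : x ^ p = 0 := by
        rw [show p = 2 + (p - 2) by omega, pow_add, hx, zero_mul]
      have hx1 : x ∈ Ideal.span {ϖ} := hker x (by rw [hxp]; exact Ideal.zero_mem _)
      obtain ⟨y, hy⟩ := Ideal.mem_span_singleton.mp hx1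
      have h1 : ϖ * (ϖ * y ^ 2) = 0 := by
        calc ϖ * (ϖ * y ^ 2) = (ϖ * y) ^ 2 := by ring
          _ = x ^ 2 := by rw [hy]
          _ = 0 := hx
      have h2 : ϖ * y ^ 2 = 0 := mem_nonZeroDivisors_iff_right.mp hϖnzd _ (by rw [mul_comm]; exact h1)
      have hy2 : y ^ 2 = 0 := mem_nonZeroDivisors_iff_right.mp hϖnzd _ (by rw [mul_comm]; exact h2)
      obtain ⟨z, hz⟩ := Ideal.mem_span_singleton.mp (ih y hy2)
      refine Ideal.mem_span_singleton.mpr ⟨z, ?_⟩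
      rw [hy, hz]; ring
  -- x^2 = 0 → x = 0
  have main : ∀ x : R, x ^ 2 = 0 → x = 0 := by
    intro x hx
    refine hc.toIsHausdorff.haus x ?_
    intro n
    rw [SModEq.zero]
    have hx' := key (p * n) x hx
    obtain ⟨z, hz⟩ := Ideal.mem_span_singleton.mp hx'
    have hd : (p : R) ∣ ϖ ^ p := by
      rw [← Ideal.mem_span_singleton, ← hspan]; exact Ideal.mem_span_singleton_self _
    have hdn : (p : R) ^ n ∣ x := by
      refine (pow_dvd_pow_of_dvd hd n).trans ⟨z, ?_⟩
      rw [hz, ← pow_mul]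
    have hxin : x ∈ Ideal.span {(p : R)} ^ n := by
      rw [Ideal.span_singleton_pow]
      exact Ideal.mem_span_singleton.mpr hdn
    have := Submodule.smul_mem_smul hxin (Submodule.mem_top (x := (1 : R)))
    simpa using this
  -- general nilpotents
  have pow_zero' : ∀ n : ℕ, ∀ x : R, x ^ n = 0 → x = 0 := by
    intro n
    induction n using Nat.strong_induction_on with
    | _ n ih =>
      intro x hx
      rcases Nat.lt_or_ge n 2 with h | h
      · interval_cases n
        · have h1 : (1 : R) = 0 := by simpa using hx
          calc x = x * 1 := (mul_one x).symm
            _ = 0 := by rw [h1, mul_zero]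
        · simpa using hx
      · have hm : (n + 1) / 2 < n := by omega
        have hsq : (x ^ ((n + 1) / 2)) ^ 2 = 0 := by
          rw [← pow_mul, show ((n + 1) / 2) * 2 = n + (2 * ((n + 1) / 2) - n) by omega,
            pow_add, hx, zero_mul]
        exact ih _ hm x (main _ hsq)
  exact ⟨fun x ⟨n, hn⟩ => pow_zero' n x hn⟩
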